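/- Let z ∈ [η, 2-η] for some η > 0 and n ≥ 2. Let k₀ = ⌊z²n/4⌋ and α_k = (z_k + √(z_k²-4))/2 with z_k = z√(n/k). Then D_n(z) := Σ_{k=1}^{k₀} log α_k satisfies D_n(z) = z²n/4 - (1/4)·log n + O(1), where the O(1) is uniform over z ∈ [η, 2-η]. -/

import Mathlib

open Real Finset

namespace Stmt19

noncomputable def g (N x : ℝ) : ℝ := Real.log (1 + Real.sqrt (1 - x/N))

noncomputable def H (N x : ℝ) : ℝ :=
  N * ((x/N) * Real.log (1 + Real.sqrt (1 - x/N)) + (1 - x/N)/2 - Real.sqrt (1 - x/N))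

lemma sqrt_four : Real.sqrt 4 = 2 := by
  rw [show (4:ℝ) = 2^2 by norm_num, Real.sqrt_sq (by norm_num)]

lemma one_le_stirlingSeq {k : ℕ} (hk : 1 ≤ k) : 1 ≤ Stirling.stirlingSeq k := by
  have htend : Filter.Tendsto (Stirling.stirlingSeq ∘ Nat.succ) Filter.atTop (nhds (Real.sqrt π)) :=
    Stirling.tendsto_stirlingSeq_sqrt_pi.comp (Filter.tendsto_add_atTop_nat 1)
  obtain ⟨m, rfl⟩ := Nat.exists_eq_add_of_le hk
  have h2 : Real.sqrt π ≤ Stirling.stirlingSeq (1 + m) := by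
    have := Stirling.stirlingSeq'_antitone.le_of_tendsto htend m
    simpa [Nat.succ_eq_add_one, Nat.add_comm] using this
  have h1 : (1:ℝ) ≤ Real.sqrt π := by
    rw [show (1:ℝ) = Real.sqrt 1 by simp]
    exact Real.sqrt_le_sqrt (by linarith [Real.pi_gt_three])
  linarith

lemma stirlingSeq_le_two {k : ℕ} (hk : 1 ≤ k) : Stirling.stirlingSeq k ≤ 2 := by
  obtain ⟨m, rfl⟩ := Nat.exists_eq_add_of_le hk
  have h1 : Stirling.stirlingSeq (1 + m) ≤ Stirling.stirlingSeq 1 := by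
    have := Stirling.stirlingSeq'_antitone (Nat.zero_le m)
    simpa [Nat.succ_eq_add_one, Nat.add_comm] using this
  have h2 : Stirling.stirlingSeq 1 = Real.exp 1 / Real.sqrt 2 := by
    rw [Stirling.stirlingSeq]
    norm_num
    rw [div_eq_mul_inv]
  have hs2 : Real.sqrt 2 ≥ 1.3592 := by
    rw [show (1.3592:ℝ) = Real.sqrt (1.3592^2) by rw [Real.sqrt_sq]; norm_num]
    exact Real.sqrt_le_sqrt (by norm_num)
  have he : Real.exp 1 < 2.7182818286 := Real.exp_one_lt_d9
  have : Real.exp 1 / Real.sqrt 2 ≤ 2 := by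
    rw [div_le_iff₀ (by positivity)]
    nlinarith
  linarith

lemma stirling_bounds {k : ℕ} (hk : 1 ≤ k) :
    0 ≤ Real.log (Nat.factorial k : ℝ) - ((k:ℝ) * Real.log k - k + Real.log k / 2) ∧
    Real.log (Nat.factorial k : ℝ) - ((k:ℝ) * Real.log k - k + Real.log k / 2) ≤ 2 := by
  have hk0 : (0:ℝ) < k := by exact_mod_cast hk
  have hfac : (Nat.factorial k : ℝ) =
      Stirling.stirlingSeq k * (Real.sqrt (2*k) * ((k:ℝ)/Real.exp 1)^k) := by
    rw [Stirling.stirlingSeq]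
    field_simp
  have hsq : (0:ℝ) < Real.sqrt (2*k) := Real.sqrt_pos.mpr (by positivity)
  have hpow : (0:ℝ) < ((k:ℝ)/Real.exp 1)^k := by positivity
  have hst1 : (1:ℝ) ≤ Stirling.stirlingSeq k := one_le_stirlingSeq hk
  have hlog : Real.log (Nat.factorial k : ℝ) = Real.log (Stirling.stirlingSeq k)
      + (Real.log 2 + Real.log k)/2 + (k:ℝ) * (Real.log k - 1) := by
    rw [hfac, Real.log_mul (by linarith) (by positivity), Real.log_mul hsq.ne' hpow.ne',
      Real.log_sqrt (by positivity), Real.log_mul (by norm_num) hk0.ne',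
      Real.log_pow, Real.log_div hk0.ne' (Real.exp_ne_zero 1), Real.log_exp]
    push_cast
    ring
  have hl1 : 0 ≤ Real.log (Stirling.stirlingSeq k) := Real.log_nonneg hst1
  have hl2 : Real.log (Stirling.stirlingSeq k) ≤ Real.log 2 :=
    Real.log_le_log (by linarith) (stirlingSeq_le_two hk)
  have hlog2 : Real.log 2 ≤ 1 := by
    linarith [Real.log_le_sub_one_of_pos (show (0:ℝ) < 2 by norm_num)]
  have hlog2' : 0 ≤ Real.log 2 := Real.log_nonneg (by norm_num)
  constructor <;> [skip; skip] <;> rw [hlog] <;> nlinarith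

lemma partA (N : ℝ) (hN : 1 ≤ N) :
    |(∑ k ∈ Icc 1 ⌊N⌋₊, Real.log (N/(k:ℝ))/2) - N/2 + Real.log N/4| ≤ 3 := by
  have hN0 : (0:ℝ) < N := by linarith
  set K := ⌊N⌋₊ with hKdef
  have hK1 : 1 ≤ K := Nat.le_floor (by exact_mod_cast hN)
  have hKR : (1:ℝ) ≤ (K:ℝ) := by exact_mod_cast hK1
  have hK0 : (0:ℝ) < (K:ℝ) := by linarith
  have hKN : (K:ℝ) ≤ N := Nat.floor_le hN0.le
  have hNK : N < (K:ℝ) + 1 := Nat.lt_floor_add_one N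
  -- rewrite the sum
  have hsum : (∑ k ∈ Icc 1 K, Real.log (N/(k:ℝ))/2)
      = ((K:ℝ) * Real.log N - Real.log (Nat.factorial K : ℝ))/2 := by
    have h1 : ∀ k ∈ Icc 1 K, Real.log (N/(k:ℝ))/2 = (Real.log N - Real.log (k:ℝ))/2 := by
      intro k hk
      have hk1 : 1 ≤ k := (Finset.mem_Icc.mp hk).1
      have : (0:ℝ) < (k:ℝ) := by exact_mod_cast hk1
      rw [Real.log_div hN0.ne' this.ne']
    rw [Finset.sum_congr rfl h1]
    have h2 : (∑ k ∈ Icc 1 K, Real.log (k:ℝ)) = Real.log (Nat.factorial K : ℝ) := by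
      rw [← Real.log_prod (fun k hk => by
        have hk1 : 1 ≤ k := (Finset.mem_Icc.mp hk).1
        have : (0:ℝ) < (k:ℝ) := by exact_mod_cast hk1
        exact this.ne')]
      congr 1
      rw [← Nat.cast_prod]
      congr 1
      rw [← Finset.Ico_add_one_right_eq_Icc]
      exact Finset.prod_Ico_id_eq_factorial K
    have h3 : (∑ k ∈ Icc 1 K, (Real.log N - Real.log (k:ℝ))/2)
        = ((∑ k ∈ Icc 1 K, Real.log N) - ∑ k ∈ Icc 1 K, Real.log (k:ℝ))/2 := by
      rw [← Finset.sum_div, ← Finset.sum_sub_distrib]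
    rw [h3, h2, Finset.sum_const, Nat.card_Icc]
    simp
  rw [hsum]
  obtain ⟨hr1, hr2⟩ := stirling_bounds hK1
  -- key inequalities
  have hlogNK : Real.log K ≤ Real.log N := Real.log_le_log hK0 hKN
  have hlogN2K : Real.log N - Real.log K ≤ 1 := by
    have h2K : N ≤ 2 * K := by linarith
    have : Real.log N ≤ Real.log 2 + Real.log K := by
      rw [← Real.log_mul (by norm_num) hK0.ne']
      exact Real.log_le_log hN0 h2K
    have hlog2 : Real.log 2 ≤ 1 := by
      linarith [Real.log_le_sub_one_of_pos (show (0:ℝ) < 2 by norm_num)]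
    linarith
  have hKd : (K:ℝ) * Real.log N - (K:ℝ) * Real.log K ≤ 1 := by
    have h := Real.log_le_sub_one_of_pos (div_pos hN0 hK0)
    rw [Real.log_div hN0.ne' hK0.ne'] at h
    have h2 : (K:ℝ) * (Real.log N - Real.log K) ≤ (K:ℝ) * (N/K - 1) :=
      mul_le_mul_of_nonneg_left h hK0.le
    have h3 : (K:ℝ) * (N/(K:ℝ) - 1) = N - K := by field_simp
    nlinarith
  have hKd0 : 0 ≤ (K:ℝ) * Real.log N - (K:ℝ) * Real.log K := by
    nlinarith
  rw [abs_le]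
  constructor <;> nlinarith

lemma g_nonneg (N x : ℝ) : 0 ≤ g N x := by
  apply Real.log_nonneg; nlinarith [Real.sqrt_nonneg (1 - x/N)]

lemma g_le (N : ℝ) {x : ℝ} (hx : 0 ≤ x) (hN : 0 < N) : g N x ≤ Real.log 2 := by
  apply Real.log_le_log (by nlinarith [Real.sqrt_nonneg (1 - x/N)])
  have : Real.sqrt (1 - x/N) ≤ 1 := by
    rw [Real.sqrt_le_one]
    have : 0 ≤ x/N := by positivity
    linarith
  linarith

lemma g_anti (N : ℝ) (hN : 0 < N) {x y : ℝ} (hxy : x ≤ y) : g N y ≤ g N x := by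
  apply Real.log_le_log (by nlinarith [Real.sqrt_nonneg (1 - y/N)])
  have : Real.sqrt (1 - y/N) ≤ Real.sqrt (1 - x/N) := by
    apply Real.sqrt_le_sqrt
    have : x/N ≤ y/N := by gcongr
    linarith
  linarith

lemma g_cont (N : ℝ) : Continuous (g N) := by
  have hc : Continuous fun x : ℝ => Real.sqrt (1 - x/N) :=
    (continuous_const.sub (continuous_id.div_const N)).sqrt
  exact (continuous_const.add hc).log fun x => by show (1:ℝ) + Real.sqrt (1 - x/N) ≠ 0; positivity

lemma H_cont (N : ℝ) : Continuous (H N) := by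
  have hc : Continuous fun x : ℝ => Real.sqrt (1 - x/N) :=
    (continuous_const.sub (continuous_id.div_const N)).sqrt
  have hlog : Continuous fun x : ℝ => Real.log (1 + Real.sqrt (1 - x/N)) :=
    (continuous_const.add hc).log fun x => by show (1:ℝ) + Real.sqrt (1 - x/N) ≠ 0; positivity
  exact continuous_const.mul ((((continuous_id.div_const N).mul hlog).add
    ((continuous_const.sub (continuous_id.div_const N)).div_const 2)).sub hc)

lemma H_deriv (N : ℝ) (hN : 0 < N) {x : ℝ} (hx0 : 0 < x) (hxN : x < N) :
    HasDerivAt (H N) (g N x) x := by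
  have hu : 0 < 1 - x/N := by rw [sub_pos, div_lt_one hN]; exact hxN
  set s := Real.sqrt (1 - x/N) with hsdef
  have hspos : 0 < s := Real.sqrt_pos.mpr hu
  have hs2 : s^2 = 1 - x/N := Real.sq_sqrt hu.le
  have hlin : HasDerivAt (fun y : ℝ => 1 - y/N) (-(1/N)) x := by
    simpa using ((hasDerivAt_id x).div_const N).const_sub 1
  have hsq : HasDerivAt (fun y : ℝ => Real.sqrt (1 - y/N)) (-(1/N) / (2*s)) x :=
    hlin.sqrt hu.ne'
  have hlog : HasDerivAt (fun y : ℝ => Real.log (1 + Real.sqrt (1 - y/N)))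
      ((-(1/N) / (2*s)) / (1 + s)) x := by
    have := ((hasDerivAt_const x (1:ℝ)).add hsq).log (ne_of_gt (by show (0:ℝ) < 1 + s; linarith))
    simpa using this
  have h1 : HasDerivAt (fun y : ℝ => y/N) (1/N) x := by
    simpa using (hasDerivAt_id x).div_const N
  have hA : HasDerivAt (fun y : ℝ => (y/N) * Real.log (1 + Real.sqrt (1 - y/N)))
      ((1/N) * Real.log (1 + s) + (x/N) * ((-(1/N) / (2*s)) / (1 + s))) x :=
    h1.mul hlog
  have hB : HasDerivAt (fun y : ℝ => (1 - y/N)/2) (-(1/N)/2) x := hlin.div_const 2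
  have hin := ((hA.add hB).sub hsq).const_mul N
  have heq : N * ((1/N) * Real.log (1 + s) + (x/N) * ((-(1/N) / (2*s)) / (1 + s)) +
      -(1/N)/2 - -(1/N) / (2*s)) = g N x := by
    rw [g, ← hsdef]
    have hxval : x = N * (1 - s^2) := by
      have : x/N = 1 - s^2 := by rw [hs2]; ring
      field_simp at this ⊢
      linarith
    rw [hxval]
    have h1s : (1:ℝ) + s ≠ 0 := by positivity
    field_simp
    ring
  rw [heq] at hin
  exact hin

lemma H_zero (N : ℝ) (hN : 0 < N) : H N 0 = -N/2 := by
  simp [H, Real.sqrt_one]; ring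

lemma H_N (N : ℝ) (hN : 0 < N) : H N N = 0 := by
  rw [H, div_self hN.ne']; simp

lemma partB (N : ℝ) (hN : 1 ≤ N) :
    N/2 - 2*Real.log 2 ≤ (∑ k ∈ Icc 1 ⌊N⌋₊, g N k) ∧
      (∑ k ∈ Icc 1 ⌊N⌋₊, g N k) ≤ N/2 := by
  have hN0 : (0:ℝ) < N := by linarith
  set K := ⌊N⌋₊ with hKdef
  have hK1 : 1 ≤ K := Nat.le_floor (by exact_mod_cast hN)
  have hKR : (1:ℝ) ≤ (K:ℝ) := by exact_mod_cast hK1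
  have hKN : (K:ℝ) ≤ N := Nat.floor_le hN0.le
  have hNK : N < (K:ℝ) + 1 := Nat.lt_floor_add_one N
  have hint : ∀ a b : ℝ, IntervalIntegrable (g N) MeasureTheory.volume a b :=
    fun a b => (g_cont N).intervalIntegrable a b
  have hlog2 : (0:ℝ) ≤ Real.log 2 := Real.log_nonneg (by norm_num)
  have ftc : ∀ a b : ℝ, 0 ≤ a → a ≤ b → b ≤ N →
      (∫ y in a..b, g N y) = H N b - H N a := by
    intro a b ha hab hbN
    refine intervalIntegral.integral_eq_sub_of_hasDeriv_right_of_le hab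
      ((H_cont N).continuousOn) (fun y hy => ?_) (hint a b)
    exact (H_deriv N hN0 (lt_of_le_of_lt ha hy.1)
      (lt_of_lt_of_le hy.2 hbN)).hasDerivWithinAt
  -- bounds on H N K and H N 1
  have hI3 : (∫ y in (K:ℝ)..N, g N y) = - H N K := by
    rw [ftc K N (by linarith) hKN le_rfl, H_N N hN0]; ring
  have hI3u : (∫ y in (K:ℝ)..N, g N y) ≤ Real.log 2 := by
    have h1 : (∫ y in (K:ℝ)..N, g N y) ≤ ∫ _ in (K:ℝ)..N, Real.log 2 := by
      apply intervalIntegral.integral_mono_on hKN (hint _ _) intervalIntegrable_const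
      intro x hx
      exact g_le N (le_trans (by linarith) hx.1) hN0
    rw [intervalIntegral.integral_const, smul_eq_mul] at h1
    nlinarith
  have hI3l : 0 ≤ (∫ y in (K:ℝ)..N, g N y) :=
    intervalIntegral.integral_nonneg hKN (fun x _ => g_nonneg N x)
  have hHK : - Real.log 2 ≤ H N K ∧ H N K ≤ 0 := by
    constructor <;> [linarith [hI3u, hI3.symm ▸ hI3u]; linarith [hI3l, hI3.symm ▸ hI3l]]
  have hI2 : (∫ y in (0:ℝ)..1, g N y) = H N 1 + N/2 := by
    rw [ftc 0 1 le_rfl (by norm_num) hN, H_zero N hN0]; ring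
  have hI2u : (∫ y in (0:ℝ)..1, g N y) ≤ Real.log 2 := by
    have h1 : (∫ y in (0:ℝ)..1, g N y) ≤ ∫ _ in (0:ℝ)..1, Real.log 2 := by
      apply intervalIntegral.integral_mono_on (by norm_num) (hint _ _) intervalIntegrable_const
      intro x hx
      exact g_le N hx.1 hN0
    rw [intervalIntegral.integral_const, smul_eq_mul] at h1
    nlinarith
  have hH1 : H N 1 ≤ -N/2 + Real.log 2 := by linarith
  -- the sums
  have hanti : ∀ x₀ : ℝ, 0 ≤ x₀ → ∀ a : ℕ, AntitoneOn (g N) (Set.Icc x₀ (x₀ + a)) :=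
    fun x₀ _ a x _ y _ hxy => g_anti N hN0 hxy
  constructor
  · -- lower bound
    have hlow := (hanti 1 (by norm_num) (K-1)).integral_le_sum
    have hcast : (1:ℝ) + ((K-1 : ℕ):ℝ) = (K:ℝ) := by
      rw [Nat.cast_sub hK1]; push_cast; ring
    rw [hcast] at hlow
    have hsum1 : (∑ i ∈ Finset.range (K-1), g N (1 + (i:ℕ)))
        ≤ ∑ k ∈ Icc 1 K, g N k := by
      have : (∑ i ∈ Finset.range (K-1), g N (1 + (i:ℕ)))
          = ∑ k ∈ Icc 1 (K-1), g N k := by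
        rw [← Finset.Ico_add_one_right_eq_Icc, Finset.sum_Ico_eq_sum_range]
        apply Finset.sum_congr (by congr 1)
        intro i _
        congr 1
        push_cast
        ring
      rw [this]
      apply Finset.sum_le_sum_of_subset_of_nonneg
      · exact Finset.Icc_subset_Icc_right (Nat.sub_le K 1)
      · exact fun k _ _ => g_nonneg N k
    have hI : (∫ x in (1:ℝ)..(K:ℝ), g N x) = H N K - H N 1 :=
      ftc 1 K (by norm_num) hKR hKN
    have : N/2 - 2*Real.log 2 ≤ H N K - H N 1 := by linarith [hHK.1]
    linarith
  · -- upper bound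
    have hup := (hanti 0 le_rfl K).sum_le_integral
    rw [zero_add] at hup
    have hsum2 : (∑ k ∈ Icc 1 K, g N k)
        = ∑ i ∈ Finset.range K, g N (0 + ((i+1 : ℕ):ℝ)) := by
      rw [← Finset.Ico_add_one_right_eq_Icc, Finset.sum_Ico_eq_sum_range]
      apply Finset.sum_congr (by congr 1)
      intro i _
      congr 1
      push_cast
      ring
    have hI : (∫ x in (0:ℝ)..(K:ℝ), g N x) = H N K + N/2 := by
      rw [ftc 0 K le_rfl (by linarith) hKN, H_zero N hN0]; ring
    rw [hsum2]
    calc (∑ i ∈ Finset.range K, g N (0 + ((i+1 : ℕ):ℝ))) ≤ ∫ x in (0:ℝ)..(K:ℝ), g N x := hup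
    _ = H N K + N/2 := hI
    _ ≤ N/2 := by linarith [hHK.2]

lemma main_est (N : ℝ) (hN : 1 ≤ N) :
    |(∑ k ∈ Icc 1 ⌊N⌋₊, (Real.log (N/(k:ℝ))/2 + g N k)) - N + Real.log N/4| ≤ 5 := by
  have h1 := partA N hN
  have h2 := partB N hN
  rw [Finset.sum_add_distrib]
  have hl2 : Real.log 2 ≤ 1 := by
    calc Real.log 2 ≤ 2 - 1 := Real.log_le_sub_one_of_pos (by norm_num)
    _ = 1 := by norm_num
  rw [abs_le] at h1 ⊢
  constructor <;> linarith [h1.1, h1.2, h2.1, h2.2]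

lemma summand_eq {z : ℝ} {n k : ℕ} (hz : 0 < z) (hn : 1 ≤ n) (hk1 : 1 ≤ k)
    (hkN : (k:ℝ) ≤ z^2 * n / 4) :
    Real.log ((z * Real.sqrt ((n:ℝ) / k) + Real.sqrt ((z * Real.sqrt ((n:ℝ) / k)) ^ 2 - 4)) / 2)
      = Real.log ((z^2 * n / 4)/(k:ℝ))/2 + g (z^2 * n / 4) k := by
  set N := z^2 * (n:ℝ) / 4 with hNdef
  have hk0 : (0:ℝ) < k := by exact_mod_cast hk1
  have hn0 : (0:ℝ) < n := by exact_mod_cast hn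
  have hN0 : (0:ℝ) < N := by positivity
  have h1 : (z * Real.sqrt ((n:ℝ)/k))^2 = 4 * (N/k) := by
    rw [mul_pow, Real.sq_sqrt (by positivity)]
    rw [hNdef]; field_simp
  have h2 : z * Real.sqrt ((n:ℝ)/k) = 2 * Real.sqrt (N/k) := by
    have ha : 0 ≤ z * Real.sqrt ((n:ℝ)/k) := by positivity
    rw [← Real.sqrt_sq ha, h1, show (4:ℝ)*(N/k) = 2^2*(N/k) by ring,
      Real.sqrt_mul (by positivity), Real.sqrt_sq (by norm_num)]
  have h3 : Real.sqrt ((z * Real.sqrt ((n:ℝ)/k))^2 - 4)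
      = 2 * (Real.sqrt (N/k) * Real.sqrt (1 - (k:ℝ)/N)) := by
    rw [h1, show (4:ℝ)*(N/k) - 4 = 2^2 * ((N/k) * (1 - (k:ℝ)/N)) by field_simp; ring,
      Real.sqrt_mul (by positivity), Real.sqrt_sq (by norm_num),
      Real.sqrt_mul (by positivity)]
  rw [h3, h2]
  have hsk : (0:ℝ) < Real.sqrt (N/k) := Real.sqrt_pos.mpr (by positivity)
  have hs1 : (0:ℝ) < 1 + Real.sqrt (1 - (k:ℝ)/N) := by
    nlinarith [Real.sqrt_nonneg (1 - (k:ℝ)/N)]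
  have h4 : (2 * Real.sqrt (N/k) + 2*(Real.sqrt (N/k) * Real.sqrt (1 - (k:ℝ)/N)))/2
      = Real.sqrt (N/k) * (1 + Real.sqrt (1 - (k:ℝ)/N)) := by ring
  rw [h4, Real.log_mul hsk.ne' hs1.ne', Real.log_sqrt (by positivity), g]

end Stmt19

theorem stmt_19 (η : ℝ) (hη : η ∈ Set.Ioo (0 : ℝ) 1) :
    ∃ C : ℝ, 0 < C ∧
      ∀ (n : ℕ), 2 ≤ n → ∀ z ∈ Set.Icc η (2 - η),
        |(∑ k ∈ Finset.Icc 1 (Nat.floor (z ^ 2 * n / 4)),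
            Real.log ((z * Real.sqrt (n / k)
              + Real.sqrt ((z * Real.sqrt (n / k)) ^ 2 - 4)) / 2))
          - z ^ 2 * n / 4 + Real.log n / 4| ≤ C := by
  obtain ⟨hη0, hη1⟩ := hη
  have hlogη : 0 < Real.log (2/η) :=
    Real.log_pos (by rw [lt_div_iff₀ hη0]; linarith)
  refine ⟨6 + Real.log (2/η), by linarith, ?_⟩
  intro n hn z hz
  obtain ⟨hz1, hz2⟩ := hz
  have hz0 : 0 < z := lt_of_lt_of_le hη0 hz1
  have hzlt2 : z < 2 := by linarith
  have hn0 : (0:ℝ) < n := by positivity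
  have hn1 : (1:ℝ) ≤ n := by exact_mod_cast (by omega : 1 ≤ n)
  set N := z^2 * (n:ℝ)/4 with hNdef
  have hN0 : 0 < N := by positivity
  have hlogN : Real.log N = Real.log (z^2/4) + Real.log n := by
    rw [hNdef, show z^2*(n:ℝ)/4 = (z^2/4) * n by ring,
      Real.log_mul (by positivity) hn0.ne']
  -- bound |log (z^2/4)|
  have hz24 : Real.log (z^2/4) = - Real.log (4/z^2) := by
    rw [← Real.log_inv]; congr 1; field_simp
  have h4z : (1:ℝ) ≤ 4/z^2 := by
    rw [le_div_iff₀ (by positivity)]; nlinarith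
  have h4znn : 0 ≤ Real.log (4/z^2) := Real.log_nonneg h4z
  have h4zle : Real.log (4/z^2) ≤ 2 * Real.log (2/η) := by
    have h1 : Real.log (4/z^2) ≤ Real.log (4/η^2) := by
      apply Real.log_le_log (by positivity)
      apply div_le_div_of_nonneg_left (by norm_num) (by positivity) (by nlinarith)
    have h2 : Real.log (4/η^2) = 2 * Real.log (2/η) := by
      rw [show 4/η^2 = (2/η)^2 by ring, Real.log_pow]
      push_cast; ring
    linarith
  by_cases hN1 : 1 ≤ N
  · -- main case
    have key := Stmt19.main_est N hN1
    have hsum : (∑ k ∈ Finset.Icc 1 ⌊N⌋₊,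
        Real.log ((z * Real.sqrt ((n:ℝ) / k)
          + Real.sqrt ((z * Real.sqrt ((n:ℝ) / k)) ^ 2 - 4)) / 2))
        = ∑ k ∈ Finset.Icc 1 ⌊N⌋₊, (Real.log (N/(k:ℝ))/2 + Stmt19.g N k) := by
      apply Finset.sum_congr rfl
      intro k hk
      obtain ⟨hk1, hk2⟩ := Finset.mem_Icc.mp hk
      have hkN : (k:ℝ) ≤ N := le_trans (by exact_mod_cast hk2) (Nat.floor_le hN0.le)
      exact Stmt19.summand_eq hz0 (by omega) hk1 hkN
    rw [hsum]
    rw [abs_le] at key ⊢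
    have habs1 : |Real.log (z^2/4)| ≤ 2 * Real.log (2/η) := by
      rw [hz24, abs_neg, abs_of_nonneg h4znn]; exact h4zle
    rw [abs_le] at habs1
    constructor <;> [nlinarith [key.1, habs1.1, habs1.2]; nlinarith [key.2, habs1.1, habs1.2]]
  · -- small case: floor = 0
    push_neg at hN1
    have hfl : ⌊N⌋₊ = 0 := Nat.floor_eq_zero.mpr hN1
    rw [hfl]
    simp only [Finset.Icc_eq_empty_of_lt (by norm_num : (1:ℕ) > 0), Finset.sum_empty]
    have hlognle : Real.log n ≤ 2 * Real.log (2/η) := by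
      have hnlt : (n:ℝ) < 4/η^2 := by
        have : η^2 * n / 4 ≤ N := by
          rw [hNdef]; gcongr
        rw [lt_div_iff₀ (by positivity)]
        nlinarith
      have := Real.log_le_log hn0 hnlt.le
      have h2 : Real.log (4/η^2) = 2 * Real.log (2/η) := by
        rw [show 4/η^2 = (2/η)^2 by ring, Real.log_pow]
        push_cast; ring
      linarith
    have hlognn : 0 ≤ Real.log n := Real.log_nonneg hn1
    rw [abs_le]
    constructor
    · linarith
    · linarith
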